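/- Over a field of characteristic zero: given a formal power series α(z)dz = (z^{g-1} + a_g z^g + a_{g+1} z^{g+1} + ⋯)dz with g ≥ 1, there exists a unique formal power series u(z) = z + c₂z² + c₃z³ + ⋯ such that u(z)^{g-1}·u'(z) = z^{g-1} + a_g z^g + a_{g+1}z^{g+1} + ⋯. -/

import Mathlib

open PowerSeries

lemma mem_span_X_pow {K : Type*} [Field K] {n : ℕ} {f : PowerSeries K} :
    f ∈ (Ideal.span {(X : PowerSeries K)}) ^ n ↔ ∀ k < n, coeff k f = 0 := by
  rw [Ideal.span_singleton_pow, Ideal.mem_span_singleton, PowerSeries.X_pow_dvd_iff]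

lemma isAdicComplete_powerSeries (K : Type*) [Field K] :
    IsAdicComplete (Ideal.span {(X : PowerSeries K)}) (PowerSeries K) := by
  refine { toIsHausdorff := ⟨?_⟩, toIsPrecomplete := ⟨?_⟩ }
  · intro x hx
    ext n
    have := hx (n + 1)
    rw [SModEq.zero, ← Ideal.one_eq_top, Ideal.smul_eq_mul, mul_one, mem_span_X_pow] at this
    simpa using this n (by omega)
  · intro f hf
    refine ⟨PowerSeries.mk fun n => coeff n (f (n + 1)), fun n => ?_⟩
    rw [SModEq.sub_mem, ← Ideal.one_eq_top, Ideal.smul_eq_mul, mul_one, mem_span_X_pow]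
    intro k hk
    have h2 := hf (show k + 1 ≤ n by omega)
    rw [SModEq.sub_mem, ← Ideal.one_eq_top, Ideal.smul_eq_mul, mul_one, mem_span_X_pow] at h2
    have := h2 k (by omega)
    simp only [map_sub, coeff_mk] at this ⊢
    rw [sub_eq_zero] at this ⊢
    exact this.symm

lemma exists_pow_root (K : Type*) [Field K] [CharZero K] (g : ℕ) (hg : 1 ≤ g)
    (B : PowerSeries K) (hB : constantCoeff B = 1) :
    ∃ w : PowerSeries K, constantCoeff w = 1 ∧ w ^ g = B := by
  haveI := isAdicComplete_powerSeries K
  set I : Ideal (PowerSeries K) := Ideal.span {(X : PowerSeries K)} with hI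
  have hmonic : (Polynomial.X ^ g - Polynomial.C B).Monic :=
    Polynomial.monic_X_pow_sub_C B (by omega)
  have heval : (Polynomial.X ^ g - Polynomial.C B).eval 1 ∈ I := by
    rw [hI, Ideal.mem_span_singleton, PowerSeries.X_dvd_iff]
    simp [hB]
  have hunit : IsUnit (Ideal.Quotient.mk I
      ((Polynomial.X ^ g - Polynomial.C B).derivative.eval 1)) := by
    have : (Polynomial.X ^ g - Polynomial.C B).derivative.eval 1 = (g : PowerSeries K) := by
      simp [Polynomial.derivative_X_pow]
    rw [this]
    refine IsUnit.map _ ?_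
    rw [PowerSeries.isUnit_iff_constantCoeff, map_natCast, isUnit_iff_ne_zero]
    exact Nat.cast_ne_zero.mpr (by omega)
  obtain ⟨w, hroot, hw1⟩ := HenselianRing.is_henselian (I := I)
    (Polynomial.X ^ g - Polynomial.C B) hmonic 1 heval hunit
  refine ⟨w, ?_, ?_⟩
  · rw [hI, Ideal.mem_span_singleton, PowerSeries.X_dvd_iff] at hw1
    simpa [sub_eq_zero] using hw1
  · have := hroot
    simp only [Polynomial.IsRoot, Polynomial.eval_sub, Polynomial.eval_pow,
      Polynomial.eval_X, Polynomial.eval_C, sub_eq_zero] at this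
    exact this

lemma pow_root_unique {K : Type*} [Field K] [CharZero K] {g : ℕ} (hg : 1 ≤ g)
    {w₁ w₂ : PowerSeries K} (h1 : constantCoeff w₁ = 1) (h2 : constantCoeff w₂ = 1)
    (h : w₁ ^ g = w₂ ^ g) : w₁ = w₂ := by
  have hfac := geom_sum₂_mul w₁ w₂ g
  rw [h, sub_self] at hfac
  have hs : (∑ i ∈ Finset.range g, w₁ ^ i * w₂ ^ (g - 1 - i)) ≠ 0 := by
    intro hzero
    have : constantCoeff (∑ i ∈ Finset.range g, w₁ ^ i * w₂ ^ (g - 1 - i)) = (g : K) := by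
      rw [map_sum]
      simp [h1, h2]
    rw [hzero, map_zero] at this
    exact (Nat.cast_ne_zero (R := K)).mpr (by omega) this.symm
  have := mul_eq_zero.mp hfac
  rcases this with h' | h'
  · exact absurd h' hs
  · exact sub_eq_zero.mp h'


/- Over a field of characteristic zero: given `α(z)dz = (z^{g-1} + a_g z^g + ⋯)dz` with
`g ≥ 1`, there is a unique formal parameter `u(z) = z + c₂z² + ⋯` with
`u(z)^{g-1}·u'(z) = z^{g-1} + a_g z^g + ⋯`. -/
theorem unique_canonical_parameter (K : Type*) [Field K] [CharZero K]
    (g : ℕ) (hg : 1 ≤ g) (a : ℕ → K) :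
    ∃! u : PowerSeries K,
      (constantCoeff u = 0 ∧ coeff 1 u = 1) ∧
      u ^ (g - 1) * d⁄dX K u =
        PowerSeries.mk fun k => if k = g - 1 then 1 else if g ≤ k then a k else 0 := by
  set α : PowerSeries K :=
    PowerSeries.mk fun k => if k = g - 1 then 1 else if g ≤ k then a k else 0 with hα
  set A : PowerSeries K :=
    PowerSeries.mk fun k => if k = 0 then 0 else ((g : K) / k) * coeff (k - 1) α with hA
  have hgK : (g : K) ≠ 0 := Nat.cast_ne_zero.mpr (by omega)
  -- derivative of A
  have hDA : d⁄dX K A = (g : PowerSeries K) * α := by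
    ext n
    rw [PowerSeries.coeff_derivative]
    have hn1 : ((n : K) + 1) ≠ 0 := Nat.cast_add_one_ne_zero n
    rw [← map_natCast (C (R := K)) g, PowerSeries.coeff_C_mul]
    simp only [hA, coeff_mk, Nat.add_sub_cancel, Nat.succ_ne_zero, if_false]
    push_cast
    field_simp
  -- A starts at X^g
  have hAlow : ∀ k < g, coeff k A = 0 := by
    intro k hk
    rcases Nat.eq_zero_or_pos k with rfl | hk0
    · simp [hA]
    · have h1 : k - 1 ≠ g - 1 := by omega
      have h2 : ¬ g ≤ k - 1 := by omega
      simp [hA, hα, (by omega : k ≠ 0), h1, h2, coeff_mk]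
  have hAg : coeff g A = 1 := by
    have h1 : g - 1 = g - 1 := rfl
    rw [hA]
    simp only [coeff_mk, if_neg (by omega : ¬ g = 0), hα]
    simp [hgK]
  -- A = X^g * B
  obtain ⟨B, hAB⟩ : (X : PowerSeries K) ^ g ∣ A := PowerSeries.X_pow_dvd_iff.mpr hAlow
  have hB1 : constantCoeff B = 1 := by
    have := hAg
    rw [hAB] at this
    have h := PowerSeries.coeff_X_pow_mul B g 0
    rw [zero_add] at h
    rw [h] at this
    simpa using this
  -- cast of g is nonzero in the power series ring
  have hgPS : ((g : PowerSeries K)) ≠ 0 := by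
    intro h
    apply hgK
    have := congrArg (constantCoeff) h
    simpa using this
  -- key equivalence
  have key : ∀ u : PowerSeries K, constantCoeff u = 0 →
      (u ^ (g - 1) * d⁄dX K u = α ↔ u ^ g = A) := by
    intro u hu0
    have hder : d⁄dX K (u ^ g) = (g : PowerSeries K) * (u ^ (g - 1) * d⁄dX K u) := by
      rw [Derivation.leibniz_pow]
      rw [smul_eq_mul, nsmul_eq_mul]
    constructor
    · intro h
      have hD : d⁄dX K (u ^ g) = d⁄dX K A := by rw [hder, h, hDA]
      have hc : constantCoeff (u ^ g) = constantCoeff A := by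
        rw [map_pow, hu0, zero_pow (by omega : g ≠ 0)]
        simpa using (hAlow 0 (by omega)).symm
      exact PowerSeries.derivative.ext hD hc
    · intro h
      have : (g : PowerSeries K) * (u ^ (g - 1) * d⁄dX K u) = (g : PowerSeries K) * α := by
        rw [← hder, h, hDA]
      exact mul_left_cancel₀ hgPS this
  -- existence
  obtain ⟨w, hw0, hwg⟩ := exists_pow_root K g hg B hB1
  have hXw : ∀ w' : PowerSeries K, constantCoeff (X * w') = 0 := by
    intro w'; simp
  refine ⟨X * w, ⟨⟨hXw w, ?_⟩, ?_⟩, ?_⟩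
  · rw [show (1 : ℕ) = 0 + 1 from rfl, PowerSeries.coeff_succ_X_mul]
    simpa using hw0
  · rw [key _ (hXw w), mul_pow, hwg, ← hAB]
  · rintro u' ⟨⟨hu'0, hu'1⟩, heq⟩
    have hu'g : u' ^ g = A := (key u' hu'0).mp heq
    obtain ⟨w', rfl⟩ : (X : PowerSeries K) ∣ u' := PowerSeries.X_dvd_iff.mpr hu'0
    have hw'0 : constantCoeff w' = 1 := by
      rw [show (1 : ℕ) = 0 + 1 from rfl, PowerSeries.coeff_succ_X_mul] at hu'1
      simpa using hu'1
    have hw'g : w' ^ g = B := by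
      have : (X : PowerSeries K) ^ g * w' ^ g = X ^ g * B := by
        rw [← mul_pow, hu'g, hAB]
      exact mul_left_cancel₀ (pow_ne_zero g PowerSeries.X_ne_zero) this
    rw [pow_root_unique hg hw'0 hw0 (by rw [hw'g, hwg])]
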